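/- Let G be a RAN whose clique-tree T has two degree-4 vertices q_i, q_j joined by a neat slim path ⟨q_i, q_1, …, q_p, q_j⟩ with p ≥ 2 and |Q_i ∩ Q_j| = 2. Then removing S = Q_i ∪ Q_j (with |S| = 6) from G produces at least 7 components, hence τ(G) < 1 and G is non-Hamiltonian. -/

import Mathlib

open SimpleGraph ENNReal

namespace RanTough

/-- Number of connected components after deleting the vertex set `S` from `G`. -/
noncomputable def compCount {V : Type*} (G : SimpleGraph V) (S : Finset V) : ℕ :=
  Nat.card (G.induce ((↑S : Set V)ᶜ)).ConnectedComponent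

/-- `G` is `t`-tough: `t * ω(G - S) ≤ |S|` whenever deleting `S` disconnects `G`. -/
def IsTough {V : Type*} (G : SimpleGraph V) (t : ℝ≥0∞) : Prop :=
  ∀ S : Finset V, 1 < compCount G S → t * compCount G S ≤ S.card

/-- The toughness of `G`: the largest `t` such that `G` is `t`-tough
(`⊤` for complete graphs). -/
noncomputable def toughness {V : Type*} (G : SimpleGraph V) : ℝ≥0∞ :=
  sSup {t : ℝ≥0∞ | IsTough G t}

/-- A vertex is simplicial if its neighborhood is a clique. -/
def IsSimplicial {V : Type*} (G : SimpleGraph V) (v : V) : Prop :=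
  G.IsClique (G.neighborSet v)

/-- `G` is a `k`-tree: there is a construction ordering starting from a
`(k+1)`-clique in which each later vertex is attached to a `k`-clique
of earlier vertices. -/
def IsKTree {V : Type*} [Fintype V] (k : ℕ) (G : SimpleGraph V) : Prop :=
  k + 1 ≤ Fintype.card V ∧
  ∃ e : Fin (Fintype.card V) ≃ V,
    (∀ i j : Fin (Fintype.card V), (i : ℕ) < k + 1 → (j : ℕ) < k + 1 → i ≠ j →
      G.Adj (e i) (e j)) ∧
    (∀ i : Fin (Fintype.card V), k + 1 ≤ (i : ℕ) →
      ∃ S : Finset V, S.card = k ∧ G.IsClique (S : Set V) ∧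
        ∀ w : V, (G.Adj (e i) w ∧ ∃ j, j < i ∧ e j = w) ↔ w ∈ S)

/-- `Q` is a maximal clique of `G`. -/
def IsMaximalClique {V : Type*} (G : SimpleGraph V) (Q : Finset V) : Prop :=
  G.IsClique (Q : Set V) ∧ ∀ R : Finset V, G.IsClique (R : Set V) → Q ⊆ R → Q = R

/-- A clique-tree of `G`: a tree on the maximal cliques of `G` satisfying the
induced subtree property. -/
def IsCliqueTree {V : Type*} (G : SimpleGraph V)
    (T : SimpleGraph {Q : Finset V // IsMaximalClique G Q}) : Prop :=
  T.IsTree ∧ ∀ v : V,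
    (T.induce {Q : {Q : Finset V // IsMaximalClique G Q} | v ∈ (Q : Finset V)}).Connected

/-- A Random Apollonian Network: a uniquely representable (unique clique-tree) 3-tree. -/
def IsRAN {V : Type*} [Fintype V] (G : SimpleGraph V) : Prop :=
  IsKTree 3 G ∧ ∃! T : SimpleGraph {Q : Finset V // IsMaximalClique G Q}, IsCliqueTree G T

/-- `S` separates the nonadjacent vertices `u` and `v`. -/
def IsUVSeparator {V : Type*} (G : SimpleGraph V) (u v : V) (S : Finset V) : Prop :=
  u ≠ v ∧ ¬ G.Adj u v ∧ u ∉ S ∧ v ∉ S ∧ ∀ p : G.Walk u v, ∃ w ∈ p.support, w ∈ S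

/-- `S` is a minimal vertex separator of `G`. -/
def IsMinVtxSep {V : Type*} (G : SimpleGraph V) (S : Finset V) : Prop :=
  ∃ u v : V, IsUVSeparator G u v S ∧ ∀ S' : Finset V, S' ⊂ S → ¬ IsUVSeparator G u v S'

/-- The multiplicity of `S` as a minimal vertex separator with respect to
the clique-tree `T`: the number of edges of `T` whose endpoint intersection is `S`. -/
noncomputable def sepMultiplicity {V : Type*} [DecidableEq V] (G : SimpleGraph V)
    (T : SimpleGraph {Q : Finset V // IsMaximalClique G Q}) (S : Finset V) : ℕ :=
  {e ∈ T.edgeSet | ∃ Q Q' : {Q : Finset V // IsMaximalClique G Q},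
    e = s(Q, Q') ∧ (Q : Finset V) ∩ (Q' : Finset V) = S}.ncard

/-- Degree of a vertex in a graph, via `Set.ncard` (no instances needed). -/
noncomputable def deg {α : Type*} (T : SimpleGraph α) (q : α) : ℕ :=
  {r | T.Adj q r}.ncard

/-- A `k`-regular tree: every vertex that is not a leaf has degree `k`. -/
def IsRegularTree {α : Type*} (k : ℕ) (T : SimpleGraph α) : Prop :=
  T.IsTree ∧ ∀ q : α, deg T q = 1 ∨ deg T q = k

/-- Chordal: every cycle of length at least 4 has a chord. -/
def IsChordal {V : Type*} (G : SimpleGraph V) : Prop :=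
  ∀ (v : V) (c : G.Walk v v), c.IsCycle → 4 ≤ c.length →
    ∃ x y : V, x ∈ c.support ∧ y ∈ c.support ∧ G.Adj x y ∧ s(x, y) ∉ c.edges

/-- `H` is a minor of `G`. -/
def IsMinor {W V : Type*} (H : SimpleGraph W) (G : SimpleGraph V) : Prop :=
  ∃ B : W → Set V,
    (∀ w, (G.induce (B w)).Connected) ∧
    (∀ w₁ w₂, w₁ ≠ w₂ → Disjoint (B w₁) (B w₂)) ∧
    (∀ w₁ w₂, H.Adj w₁ w₂ → ∃ u ∈ B w₁, ∃ v ∈ B w₂, G.Adj u v)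

/-- Planar (Wagner): no `K₅` and no `K₃,₃` minor. -/
def IsPlanar {V : Type*} (G : SimpleGraph V) : Prop :=
  ¬ IsMinor (⊤ : SimpleGraph (Fin 5)) G ∧
  ¬ IsMinor (completeBipartiteGraph (Fin 3) (Fin 3)) G

end RanTough

open RanTough

namespace RTAux

set_option linter.unusedSectionVars false

section Generic
variable {α : Type*} [DecidableEq α]

/-- In an acyclic graph, the support of a path is contained in the support of any walk
with the same endpoints. -/
lemma path_support_subset {T : SimpleGraph α} (hac : T.IsAcyclic) {A B : α}
    {P W : T.Walk A B} (hP : P.IsPath) : P.support ⊆ W.support := by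
  have h : (⟨P, hP⟩ : T.Path A B) = W.toPath := hac.path_unique _ _
  intro x hx
  have hx' : x ∈ (W.toPath : T.Walk A B).support := by rw [← h]; exact hx
  exact W.support_toPath_subset hx'

/-- A walk whose support lies in `K` gives reachability in the induced graph. -/
lemma reach_induce {T : SimpleGraph α} (K : Set α) :
    ∀ {A B : α} (W : T.Walk A B), (∀ x ∈ W.support, x ∈ K) →
      ∀ (hA : A ∈ K) (hB : B ∈ K), (T.induce K).Reachable ⟨A, hA⟩ ⟨B, hB⟩ := by
  intro A B W
  induction W with
  | nil => intro _ _ _; exact Reachable.refl _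
  | @cons u v w h q ih =>
    intro hW hA hB
    have hv : v ∈ K := hW v (by simp)
    have hadj : (T.induce K).Adj ⟨u, hA⟩ ⟨v, hv⟩ := h
    exact (hadj.reachable).trans (ih (fun x hx => hW x (by simp [hx])) hv hB)

/-- If the (unique) path between `A` and `B` in an acyclic graph passes through a vertex
outside `K`, then `A` and `B` are not reachable in the graph induced on `K`. -/
lemma not_reach_induce {T : SimpleGraph α} (hac : T.IsAcyclic) (K : Set α) {A B : α}
    (P : T.Walk A B) (hP : P.IsPath) {z : α} (hz : z ∈ P.support) (hzK : z ∉ K)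
    (hA : A ∈ K) (hB : B ∈ K) : ¬ (T.induce K).Reachable ⟨A, hA⟩ ⟨B, hB⟩ := by
  rintro ⟨W⟩
  have hsub := path_support_subset hac (W := W.map (SimpleGraph.Embedding.induce K).toHom) hP
  have := hsub hz
  rw [Walk.support_map] at this
  obtain ⟨⟨x, hx⟩, -, rfl⟩ := List.mem_map.1 this
  exact hzK hx

/-- In an acyclic graph, a neighbour `r` of `x` lying on a path starting at `x`
must be the second vertex of that path. -/
lemma adj_mem_path_eq {T : SimpleGraph α} (hac : T.IsAcyclic) {x x1 y : α}
    (h1 : T.Adj x x1) (P1 : T.Walk x1 y) (hP : (Walk.cons h1 P1).IsPath)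
    {r : α} (hr : T.Adj x r) (hmem : r ∈ (Walk.cons h1 P1).support) : r = x1 := by
  have htk : ((Walk.cons h1 P1).takeUntil r hmem).IsPath := hP.takeUntil hmem
  have hsingle : (Walk.cons hr Walk.nil : T.Walk x r).IsPath := by
    simp [Walk.cons_isPath_iff, hr.ne]
  have hequ : (⟨(Walk.cons h1 P1).takeUntil r hmem, htk⟩ : T.Path x r) =
      ⟨Walk.cons hr Walk.nil, hsingle⟩ := hac.path_unique _ _
  have htke : (Walk.cons h1 P1).takeUntil r hmem = Walk.cons hr Walk.nil :=
    congrArg Subtype.val hequ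
  have hspec := (Walk.cons h1 P1).take_spec hmem
  rw [htke] at hspec
  have hPP : Walk.cons hr (Walk.nil.append ((Walk.cons h1 P1).dropUntil r hmem)) =
      Walk.cons h1 P1 := by rw [← Walk.cons_append]; exact hspec
  have h2 := congrArg Walk.support hPP
  simp only [Walk.support_cons] at h2
  have h3 : (Walk.nil.append ((Walk.cons h1 P1).dropUntil r hmem)).support = P1.support :=
    (List.cons.inj h2).2
  rw [Walk.support_eq_cons (Walk.nil.append ((Walk.cons h1 P1).dropUntil r hmem)),
    Walk.support_eq_cons P1] at h3
  exact (List.cons.inj h3).1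


end Generic

section CliqueStuff
variable {V : Type*} [Fintype V] [DecidableEq V] {G : SimpleGraph V}

lemma maxclique_card_four (hK : IsKTree 3 G) {Q : Finset V} (hQ : IsMaximalClique G Q) :
    Q.card = 4 := by
  obtain ⟨hn, e, hbase, hstep⟩ := hK
  classical
  by_cases hcase : ∀ v ∈ Q, ((e.symm v : Fin (Fintype.card V)) : ℕ) < 4
  · -- Q is inside the base 4-clique
    set B : Finset V := (Finset.univ : Finset (Fin 4)).image (fun k => e (Fin.castLE hn k))
      with hB
    have hinj : Function.Injective (fun k : Fin 4 => e (Fin.castLE hn k)) :=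
      fun a b hab => Fin.castLE_injective hn (e.injective hab)
    have hBcard : B.card = 4 := by
      rw [hB, Finset.card_image_of_injective _ hinj, Finset.card_univ, Fintype.card_fin]
    have hBmem : ∀ v : V, ((e.symm v : Fin (Fintype.card V)) : ℕ) < 4 → v ∈ B := by
      intro v hv
      rw [hB]
      refine Finset.mem_image.2 ⟨⟨(e.symm v : ℕ), hv⟩, Finset.mem_univ _, ?_⟩
      have : Fin.castLE hn ⟨((e.symm v : Fin (Fintype.card V)) : ℕ), hv⟩ = e.symm v := by
        apply Fin.ext; simp
      rw [this, Equiv.apply_symm_apply]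
    have hBclique : G.IsClique (B : Set V) := by
      intro x hx y hy hxy
      simp only [hB, Finset.coe_image, Set.mem_image, Finset.mem_coe] at hx hy
      obtain ⟨kx, -, rfl⟩ := hx
      obtain ⟨ky, -, rfl⟩ := hy
      refine hbase _ _ (by simp) (by simp) ?_
      intro h; exact hxy (by rw [h])
    have hsub : Q ⊆ B := fun v hv => hBmem v (hcase v hv)
    rw [hQ.2 B hBclique hsub]; exact hBcard
  · push_neg at hcase
    obtain ⟨v₀, hv₀Q, hv₀⟩ := hcase
    set I : Finset (Fin (Fintype.card V)) := Q.image (fun v => e.symm v) with hI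
    have hInonempty : I.Nonempty := ⟨_, Finset.mem_image_of_mem _ hv₀Q⟩
    set i : Fin (Fintype.card V) := I.max' hInonempty with hi
    have hiQ : e i ∈ Q := by
      have h' : i ∈ I := I.max'_mem hInonempty
      obtain ⟨w, hw, hwi⟩ := Finset.mem_image.1 h'
      rw [← hwi, Equiv.apply_symm_apply]; exact hw
    have hile : ∀ w ∈ Q, e.symm w ≤ i :=
      fun w hw => I.le_max' _ (Finset.mem_image_of_mem _ hw)
    have h4i : 4 ≤ (i : ℕ) := le_trans hv₀ (hile v₀ hv₀Q)
    obtain ⟨S, hScard, hSclique, hSiff⟩ := hstep i h4i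
    have heiS : e i ∉ S := by
      intro h
      exact G.irrefl ((hSiff (e i)).2 h).1
    have hsub : Q ⊆ insert (e i) S := by
      intro w hw
      rcases eq_or_ne w (e i) with h | hne
      · rw [h]; exact Finset.mem_insert_self _ _
      · have hadj : G.Adj (e i) w := hQ.1 (Finset.mem_coe.2 hiQ) (Finset.mem_coe.2 hw)
          (fun h => hne h.symm)
        have hj : e.symm w < i := by
          refine lt_of_le_of_ne (hile w hw) (fun h => hne ?_)
          rw [← h, Equiv.apply_symm_apply]
        exact Finset.mem_insert_of_mem
          ((hSiff w).1 ⟨hadj, e.symm w, hj, by rw [Equiv.apply_symm_apply]⟩)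
    have hclique : G.IsClique ((insert (e i) S : Finset V) : Set V) := by
      rw [Finset.coe_insert]
      exact hSclique.insert (fun b hb _ => ((hSiff b).2 hb).1)
    rw [hQ.2 _ hclique hsub, Finset.card_insert_of_notMem heiS, hScard]

lemma edge_maxclique {x y : V} (h : G.Adj x y) :
    ∃ Q : Finset V, IsMaximalClique G Q ∧ x ∈ Q ∧ y ∈ Q := by
  classical
  set C : Set (Finset V) := {R | G.IsClique (R : Set V) ∧ x ∈ R ∧ y ∈ R} with hC
  have hne : C.Nonempty := by
    refine ⟨{x, y}, ?_, by simp, by simp⟩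
    intro a ha b hb hab
    simp only [Finset.coe_insert, Set.mem_insert_iff, Finset.coe_singleton,
      Set.mem_singleton_iff] at ha hb
    rcases ha with rfl | rfl <;> rcases hb with rfl | rfl
    · exact absurd rfl hab
    · exact h
    · exact h.symm
    · exact absurd rfl hab
  obtain ⟨R, hRC, hmax⟩ := Set.Finite.exists_maximalFor id C (Set.toFinite _) hne
  refine ⟨R, ⟨hRC.1, ?_⟩, hRC.2.1, hRC.2.2⟩
  intro R' hR' hsub
  exact Finset.Subset.antisymm hsub (hmax ⟨hR', hsub hRC.2.1, hsub hRC.2.2⟩ hsub)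

variable {T : SimpleGraph {Q : Finset V // IsMaximalClique G Q}}

/-- Induced subtree property along paths of the clique tree. -/
lemma mem_of_on_path (hT : IsCliqueTree G T) {A B : {Q : Finset V // IsMaximalClique G Q}}
    {P : T.Walk A B} (hP : P.IsPath) {v : V} (hA : v ∈ (A : Finset V)) (hB : v ∈ (B : Finset V)) :
    ∀ x ∈ P.support, v ∈ (x : Finset V) := by
  have hconn := hT.2 v
  obtain ⟨W⟩ := hconn.preconnected ⟨A, hA⟩ ⟨B, hB⟩
  have hsub : P.support ⊆
      (W.map (SimpleGraph.Embedding.induce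
        {Q : {Q : Finset V // IsMaximalClique G Q} | v ∈ (Q : Finset V)}).toHom :
        T.Walk A B).support :=
    path_support_subset hT.1.IsAcyclic hP
  intro x hx
  have hx2 := hsub hx
  rw [Walk.support_map] at hx2
  obtain ⟨⟨x', hx'⟩, -, rfl⟩ := List.mem_map.1 hx2
  exact hx'

lemma ham_compCount_le (hham : G.IsHamiltonian) (S : Finset V) (hS : S.Nonempty)
    (hV : 2 ≤ Fintype.card V) : compCount G S ≤ S.card := by
  classical
  obtain ⟨a₀, c₀, hc₀⟩ := hham (by omega)
  obtain ⟨a, ha⟩ := hS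
  have hmem := hc₀.mem_support a
  set c : G.Walk a a := c₀.rotate a hmem with hc
  have hcyc : c.IsCycle := hc₀.isCycle.rotate hmem
  have htail : ∀ x, c.support.tail.count x = 1 := by
    intro x
    rw [(Walk.support_rotate c₀ a hmem).perm.count_eq]
    rw [← Walk.support_tail_of_not_nil c₀ hc₀.isCycle.not_nil]
    exact hc₀.isHamiltonian_tail x
  set L : List V := c.support with hL
  have hcons : L = a :: L.tail := Walk.support_eq_cons c
  have hnodup : L.tail.Nodup := List.nodup_iff_count_le_one.2 (fun x => le_of_eq (htail x))
  have hlen3 : 3 ≤ c.length := hcyc.three_le_length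
  have hLlen : L.length = c.length + 1 := Walk.length_support c
  set n := L.length with hn
  have hLtl : L.tail.length = c.length := by
    have h1 := congrArg List.length hcons
    simp only [List.length_cons] at h1
    omega
  have hget0 : ∀ (h : 0 < n), L[0]'h = a := by
    intro h
    rw [List.getElem_of_eq hcons]
    simp
  have hgetsucc : ∀ (k : ℕ) (h : k + 1 < n), L[k+1]'h = L.tail[k]'(by omega) := by
    intro k h
    rw [List.getElem_of_eq hcons]
    simp
  have hlastelem : L.tail[L.tail.length - 1]'(by omega) = a := by
    have h1 : L.tail ≠ [] := by
      intro h; rw [h] at hLtl; simp at hLtl; omega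
    rw [← List.getLast_eq_getElem h1]
    have h2 : L.getLast (by rw [hcons]; simp) = a := Walk.getLast_support c
    have h4 : L.getLast? = some a := by
      rw [List.getLast?_eq_getLast (l := L) (by rw [hcons]; simp)]
      rw [h2]
    rw [hcons, List.getLast?_cons, List.getLast?_eq_getLast (l := L.tail) h1] at h4
    simpa using h4
  have hchain : L.IsChain G.Adj := Walk.isChain_adj_support c
  have hmemL : ∀ v : V, v ∈ L := by
    intro v
    apply List.mem_of_mem_tail
    rw [← List.count_pos_iff]
    rw [htail v]; omega
  -- the key claim
  have claim : ∀ m (hm : m < n) (hms : L[m]'hm ∉ S),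
      ∃ i, ∃ h1 : i + 1 < n, (L[i]'(by omega) ∈ S) ∧ ∃ h2 : L[i+1]'h1 ∉ S,
        (G.induce ((↑S : Set V)ᶜ)).Reachable
          ⟨L[i+1]'h1, by simpa using h2⟩ ⟨L[m]'hm, by simpa using hms⟩ := by
    intro m
    induction m with
    | zero =>
      intro hm hms
      exact absurd (hget0 hm ▸ ha) hms
    | succ k ih =>
      intro hm hms
      have hk : k < n := by omega
      by_cases hkS : L[k]'hk ∈ S
      · exact ⟨k, hm, hkS, hms, Reachable.refl _⟩
      · have hadj : G.Adj (L[k]'hk) (L[k+1]'hm) := by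
          have := List.isChain_iff_getElem.1 hchain k (by omega)
          simpa using this
        have hadj' : (G.induce ((↑S : Set V)ᶜ)).Adj ⟨L[k]'hk, by simpa using hkS⟩
            ⟨L[k+1]'hm, by simpa using hms⟩ := hadj
        obtain ⟨i, h1, hiS, h2, hreach⟩ := ih hk hkS
        exact ⟨i, h1, hiS, h2, hreach.trans hadj'.reachable⟩
  -- index injectivity on L for "inner" positions
  have hLinj : ∀ (i j : ℕ) (hi : i + 1 < n) (hj : j + 1 < n),
      L[i]'(by omega) = L[j]'(by omega) → i = j := by
    intro i j hi hj heq
    rcases Nat.eq_zero_or_pos i with hi0 | hipos <;> rcases Nat.eq_zero_or_pos j with hj0 | hjpos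
    · omega
    · exfalso
      subst hi0
      obtain ⟨j', rfl⟩ := Nat.exists_eq_succ_of_ne_zero (by omega : j ≠ 0)
      rw [hget0 (by omega), hgetsucc j' (by omega)] at heq
      have : L.tail[L.tail.length - 1]'(by omega) = L.tail[j']'(by omega) := by
        rw [hlastelem]; exact heq
      have hj1 := (List.Nodup.getElem_inj_iff hnodup).1 this
      omega
    · exfalso
      subst hj0
      obtain ⟨i', rfl⟩ := Nat.exists_eq_succ_of_ne_zero (by omega : i ≠ 0)
      rw [hget0 (by omega), hgetsucc i' (by omega)] at heq
      have : L.tail[L.tail.length - 1]'(by omega) = L.tail[i']'(by omega) := by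
        rw [hlastelem]; exact heq.symm
      have hi1 := (List.Nodup.getElem_inj_iff hnodup).1 this
      omega
    · obtain ⟨i', rfl⟩ := Nat.exists_eq_succ_of_ne_zero (by omega : i ≠ 0)
      obtain ⟨j', rfl⟩ := Nat.exists_eq_succ_of_ne_zero (by omega : j ≠ 0)
      rw [hgetsucc i' (by omega), hgetsucc j' (by omega)] at heq
      have := (List.Nodup.getElem_inj_iff hnodup).1 heq
      omega
  set P : Fin n → Prop :=
    fun i => ∃ h1 : (i : ℕ) + 1 < n, (L[(i : ℕ)+1]'h1 ∉ S) ∧ L[(i : ℕ)]'i.2 ∈ S with hP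
  have hφsurj : Function.Surjective
      (fun t : {i : Fin n // P i} =>
        (G.induce ((↑S : Set V)ᶜ)).connectedComponentMk
          ⟨L[(t.1 : ℕ)+1]'t.2.choose, by simpa using t.2.choose_spec.1⟩) := by
    intro D
    obtain ⟨⟨u, hu⟩, rfl⟩ := Quot.exists_rep D
    have huS : u ∉ S := by simpa using hu
    obtain ⟨m, hm, hLm⟩ := List.mem_iff_getElem.1 (hmemL u)
    obtain ⟨i, h1, hiS, h2, hreach⟩ := claim m hm (by rw [hLm]; exact huS)
    refine ⟨⟨⟨i, by omega⟩, h1, h2, hiS⟩, ?_⟩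
    apply ConnectedComponent.sound
    have heq : (⟨L[m]'hm, by simp [hLm]; simpa using huS⟩ :
        {x : V // x ∈ ((↑S : Set V)ᶜ)}) = ⟨u, hu⟩ := by
      simp only [Subtype.mk.injEq]; exact hLm
    rw [← heq]
    exact hreach
  have hψinj : Function.Injective
      (fun t : {i : Fin n // P i} =>
        (⟨L[(t.1 : ℕ)]'t.1.2, t.2.choose_spec.2⟩ : {x : V // x ∈ S})) := by
    rintro ⟨⟨i, hi⟩, hPi⟩ ⟨⟨j, hj⟩, hPj⟩ heq
    simp only [Subtype.mk.injEq] at heq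
    have h1i : i + 1 < n := hPi.choose
    have h1j : j + 1 < n := hPj.choose
    have := hLinj i j h1i h1j heq
    apply Subtype.ext; apply Fin.ext; exact this
  calc compCount G S ≤ Nat.card {i : Fin n // P i} :=
        Nat.card_le_card_of_surjective _ hφsurj
    _ ≤ Nat.card {x : V // x ∈ S} := Nat.card_le_card_of_injective _ hψinj
    _ = S.card := by rw [Nat.card_eq_fintype_card, Fintype.card_coe]


end CliqueStuff

end RTAux

open RTAux


/-- If the clique-tree of a RAN has two degree-4 vertices joined by a neat slim path
with at least 2 internal vertices and `|Q_i ∩ Q_j| = 2`, then removing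
`S = Q_i ∪ Q_j` (with `|S| = 6`) produces at least 7 components, hence `τ(G) < 1`
and `G` is non-Hamiltonian. -/
theorem ran_slimPath_case1 {V : Type*} [Fintype V] [DecidableEq V]
    (G : SimpleGraph V) (hG : IsRAN G)
    (T : SimpleGraph {Q : Finset V // IsMaximalClique G Q}) (hT : IsCliqueTree G T)
    (qi qj : {Q : Finset V // IsMaximalClique G Q})
    (hqi : deg T qi = 4) (hqj : deg T qj = 4)
    (p : T.Walk qi qj) (hp : p.IsPath) (hlen : 3 ≤ p.length)
    (hneat : ∀ q ∈ p.support, q ≠ qi → q ≠ qj → deg T q ≤ 3)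
    (hslim : ∃ q ∈ p.support, q ≠ qi ∧ q ≠ qj ∧ deg T q = 2)
    (hcap : ((qi : Finset V) ∩ (qj : Finset V)).card = 2) :
    ((qi : Finset V) ∪ (qj : Finset V)).card = 6 ∧
    7 ≤ compCount G ((qi : Finset V) ∪ (qj : Finset V)) ∧
    toughness G < 1 ∧ ¬ G.IsHamiltonian := by
  classical
  obtain ⟨hK, -⟩ := hG
  have htree := hT.1
  have hac := htree.IsAcyclic
  have card4 : ∀ Q : {Q : Finset V // IsMaximalClique G Q}, (Q : Finset V).card = 4 :=
    fun Q => maxclique_card_four hK Q.2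
  set U : Finset V := (qi : Finset V) ∪ (qj : Finset V) with hUdef
  -- the two endpoints are distinct
  have hqiqj : qi ≠ qj := by
    intro h
    subst h
    have hnil := SimpleGraph.Path.loop_eq (⟨p, hp⟩ : T.Path qi qi)
    have hpn : p = Walk.nil := congrArg Subtype.val hnil
    rw [hpn] at hlen
    simp at hlen
  have hcup : U.card = 6 := by
    have hcui := Finset.card_union_add_card_inter (qi : Finset V) (qj : Finset V)
    rw [hcap, card4 qi, card4 qj] at hcui
    rw [hUdef]
    omega
  -- decompose the path structurally
  obtain ⟨q1, h1, p1, rfl⟩ := Walk.exists_eq_cons_of_ne hqiqj p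
  have hq1j : q1 ≠ qj := by
    intro h
    subst h
    have hnil := SimpleGraph.Path.loop_eq (⟨p1, hp.of_cons⟩ : T.Path q1 q1)
    have hpn : p1 = Walk.nil := congrArg Subtype.val hnil
    rw [hpn] at hlen
    simp at hlen
  obtain ⟨q2, h2, p2, rfl⟩ := Walk.exists_eq_cons_of_ne hq1j p1
  have hp1 : (Walk.cons h2 p2).IsPath := hp.of_cons
  have hp2 : p2.IsPath := hp1.of_cons
  have hqi_not : qi ∉ (Walk.cons h2 p2).support := ((Walk.cons_isPath_iff _ _).1 hp).2
  have hq1_not : q1 ∉ p2.support := ((Walk.cons_isPath_iff _ _).1 hp1).2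
  have hlen2 : 1 ≤ p2.length := by
    have hl := hlen
    simp only [Walk.length_cons] at hl
    omega
  have hq2j : q2 ≠ qj := by
    intro h
    subst h
    have hnil := SimpleGraph.Path.loop_eq (⟨p2, hp2⟩ : T.Path q2 q2)
    have hpn : p2 = Walk.nil := congrArg Subtype.val hnil
    rw [hpn] at hlen2
    simp at hlen2
  have hq1i : q1 ≠ qi := h1.ne'
  have hq2i : q2 ≠ qi := by
    intro h
    apply hqi_not
    rw [Walk.support_cons]
    exact List.mem_cons_of_mem _ (h ▸ p2.start_mem_support)
  have hq1q2 : q1 ≠ q2 := h2.ne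
  -- membership facts for q1 q2 in the support of p
  have hq1mem : q1 ∈ (Walk.cons h1 (Walk.cons h2 p2)).support := by
    rw [Walk.support_cons]
    exact List.mem_cons_of_mem _ (Walk.start_mem_support _)
  have hq2mem : q2 ∈ (Walk.cons h1 (Walk.cons h2 p2)).support := by
    rw [Walk.support_cons, Walk.support_cons]
    exact List.mem_cons_of_mem _ (List.mem_cons_of_mem _ p2.start_mem_support)
  -- no vertex adjacent to qi can be qj (and vice versa)
  have hrqj : ∀ r : {Q : Finset V // IsMaximalClique G Q}, T.Adj qi r → r ≠ qj := by
    intro r hr h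
    subst h
    have hsingle : (Walk.cons hr Walk.nil : T.Walk qi r).IsPath := by
      simp [Walk.cons_isPath_iff, hr.ne]
    have hequ := hac.path_unique
      (⟨Walk.cons h1 (Walk.cons h2 p2), hp⟩ : T.Path qi r) ⟨Walk.cons hr Walk.nil, hsingle⟩
    have hlq := congrArg (fun q : T.Path qi r => q.1.length) hequ
    simp only [Walk.length_cons, Walk.length_nil] at hlq
    omega
  have hrs_false : ∀ r : {Q : Finset V // IsMaximalClique G Q},
      T.Adj qi r → T.Adj qj r → False := by
    intro r hr hs
    have hinner : (Walk.cons hs.symm Walk.nil : T.Walk r qj).IsPath := by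
      simp [Walk.cons_isPath_iff, hs.ne']
    have hpath2 : (Walk.cons hr (Walk.cons hs.symm Walk.nil) : T.Walk qi qj).IsPath := by
      rw [Walk.cons_isPath_iff]
      refine ⟨hinner, ?_⟩
      simp [hr.ne, hqiqj]
    have hequ := hac.path_unique
      (⟨Walk.cons h1 (Walk.cons h2 p2), hp⟩ : T.Path qi qj) ⟨_, hpath2⟩
    have hlq := congrArg (fun q : T.Path qi qj => q.1.length) hequ
    simp only [Walk.length_cons, Walk.length_nil] at hlq
    omega
  have hsqi : ∀ s : {Q : Finset V // IsMaximalClique G Q}, T.Adj qj s → s ≠ qi :=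
    fun s hs h => (hrqj qj (h ▸ hs).symm rfl).elim
  -- neighbours of qi other than q1
  have hnbri : ({r | T.Adj qi r} \ {q1}).ncard = 3 := by
    have h4 : ({r | T.Adj qi r}).ncard = 4 := hqi
    rw [Set.ncard_diff_singleton_of_mem (s := {r | T.Adj qi r}) (a := q1) h1, h4]
  obtain ⟨r1, r2, r3, hr12, hr13, hr23, hrset⟩ := Set.ncard_eq_three.1 hnbri
  have hrfact : ∀ r ∈ ({r1, r2, r3} : Set {Q : Finset V // IsMaximalClique G Q}),
      T.Adj qi r ∧ r ≠ q1 := by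
    intro r hr
    rw [← hrset] at hr
    exact ⟨hr.1, by simpa using hr.2⟩
  -- neighbours of qj other than the second vertex of the reverse path
  obtain ⟨b1, hb1, pr1, hpreq⟩ :=
    Walk.exists_eq_cons_of_ne (Ne.symm hqiqj) (Walk.cons h1 (Walk.cons h2 p2)).reverse
  have hnbrj : ({r | T.Adj qj r} \ {b1}).ncard = 3 := by
    have h4 : ({r | T.Adj qj r}).ncard = 4 := hqj
    rw [Set.ncard_diff_singleton_of_mem (s := {r | T.Adj qj r}) (a := b1) hb1, h4]
  obtain ⟨s1, s2, s3, hs12, hs13, hs23, hsset⟩ := Set.ncard_eq_three.1 hnbrj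
  have hsfact : ∀ s ∈ ({s1, s2, s3} : Set {Q : Finset V // IsMaximalClique G Q}),
      T.Adj qj s ∧ s ≠ b1 := by
    intro s hs
    rw [← hsset] at hs
    exact ⟨hs.1, by simpa using hs.2⟩
  -- off-path properties
  have hrnot : ∀ r : {Q : Finset V // IsMaximalClique G Q}, T.Adj qi r → r ≠ q1 →
      r ∉ (Walk.cons h1 (Walk.cons h2 p2)).support := by
    intro r hr hrne hmem
    exact hrne (adj_mem_path_eq hac h1 _ hp hr hmem)
  have hprpath : (Walk.cons h1 (Walk.cons h2 p2)).reverse.IsPath := hp.reverse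
  have hsnot : ∀ s : {Q : Finset V // IsMaximalClique G Q}, T.Adj qj s → s ≠ b1 →
      s ∉ (Walk.cons h1 (Walk.cons h2 p2)).support := by
    intro s hs hsne hmem
    have hmem' : s ∈ (Walk.cons hb1 pr1).support := by
      rw [← hpreq, Walk.support_reverse]
      exact List.mem_reverse.2 hmem
    have hP' : (Walk.cons hb1 pr1).IsPath := hpreq ▸ hprpath
    exact hsne (adj_mem_path_eq hac hb1 _ hP' hs hmem')
  -- private vertices for the off-path neighbours of qi
  have hrv : ∀ r : {Q : Finset V // IsMaximalClique G Q}, T.Adj qi r →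
      r ∉ (Walk.cons h1 (Walk.cons h2 p2)).support →
      ∃ v, v ∈ (r : Finset V) ∧ v ∉ U := by
    intro r hr hrnp
    by_contra hcon
    push_neg at hcon
    have hsub : (r : Finset V) ⊆ (qi : Finset V) := by
      intro v hv
      rcases Finset.mem_union.1 (hcon v hv) with h | h
      · exact h
      · have hpath : (Walk.cons hr.symm (Walk.cons h1 (Walk.cons h2 p2))).IsPath :=
          hp.cons hrnp
        refine mem_of_on_path hT hpath hv h qi ?_
        rw [Walk.support_cons]
        exact List.mem_cons_of_mem _ (Walk.start_mem_support _)
    have heq : (r : Finset V) = (qi : Finset V) :=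
      Finset.eq_of_subset_of_card_le hsub (by rw [card4, card4])
    exact hr.ne (Subtype.ext heq).symm
  -- private vertices for the off-path neighbours of qj
  have hsv : ∀ s : {Q : Finset V // IsMaximalClique G Q}, T.Adj qj s →
      s ∉ (Walk.cons h1 (Walk.cons h2 p2)).support →
      ∃ v, v ∈ (s : Finset V) ∧ v ∉ U := by
    intro s hs hsnp
    by_contra hcon
    push_neg at hcon
    have hsnp' : s ∉ (Walk.cons h1 (Walk.cons h2 p2)).reverse.support := by
      rw [Walk.support_reverse]
      exact fun hmem => hsnp (List.mem_reverse.1 hmem)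
    have hsub : (s : Finset V) ⊆ (qj : Finset V) := by
      intro v hv
      rcases Finset.mem_union.1 (hcon v hv) with h | h
      · have hpath : (Walk.cons hs.symm (Walk.cons h1 (Walk.cons h2 p2)).reverse).IsPath :=
          hprpath.cons hsnp'
        refine mem_of_on_path hT hpath hv h qj ?_
        rw [Walk.support_cons]
        exact List.mem_cons_of_mem _ (Walk.start_mem_support _)
      · exact h
    have heq : (s : Finset V) = (qj : Finset V) :=
      Finset.eq_of_subset_of_card_le hsub (by rw [card4, card4])
    exact hs.ne (Subtype.ext heq).symm
  -- every node on the path contains the two common vertices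
  have hcapmem : ∀ v ∈ (qi : Finset V) ∩ (qj : Finset V),
      ∀ x ∈ (Walk.cons h1 (Walk.cons h2 p2)).support, v ∈ (x : Finset V) := by
    intro v hv
    exact mem_of_on_path hT hp (Finset.mem_inter.1 hv).1 (Finset.mem_inter.1 hv).2
  -- middle witness
  have hmid : ∃ m : {Q : Finset V // IsMaximalClique G Q},
      m ∈ (Walk.cons h1 (Walk.cons h2 p2)).support ∧ m ≠ qi ∧ m ≠ qj ∧
      ∃ v, v ∈ (m : Finset V) ∧ v ∉ U := by
    by_cases hc1 : ∀ v ∈ (q1 : Finset V), v ∈ U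
    · by_cases hc2 : ∀ v ∈ (q2 : Finset V), v ∈ U
      · exfalso
        -- extraction of "new" vertices from q1, q2
        have hgenj : ∀ A : {Q : Finset V // IsMaximalClique G Q},
            (∀ v ∈ (A : Finset V), v ∈ U) → A ≠ qi →
            ∃ y ∈ (A : Finset V), y ∈ (qj : Finset V) ∧ y ∉ (qi : Finset V) := by
          intro A hAsub hne
          by_contra hcon
          push_neg at hcon
          have hsub : (A : Finset V) ⊆ (qi : Finset V) := by
            intro v hv
            rcases Finset.mem_union.1 (hAsub v hv) with h | h
            · exact h
            · exact hcon v hv h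
          exact hne (Subtype.ext (Finset.eq_of_subset_of_card_le hsub (by rw [card4, card4])))
        have hgeni : ∀ A : {Q : Finset V // IsMaximalClique G Q},
            (∀ v ∈ (A : Finset V), v ∈ U) → A ≠ qj →
            ∃ x ∈ (A : Finset V), x ∈ (qi : Finset V) ∧ x ∉ (qj : Finset V) := by
          intro A hAsub hne
          by_contra hcon
          push_neg at hcon
          have hsub : (A : Finset V) ⊆ (qj : Finset V) := by
            intro v hv
            rcases Finset.mem_union.1 (hAsub v hv) with h | h
            · exact hcon v hv h
            · exact h
          exact hne (Subtype.ext (Finset.eq_of_subset_of_card_le hsub (by rw [card4, card4])))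
        obtain ⟨y1, hy1Q1, hy1j, hy1i⟩ := hgenj q1 hc1 hq1i
        obtain ⟨x1, hx1Q1, hx1i, hx1j⟩ := hgeni q1 hc1 hq1j
        obtain ⟨y2, hy2Q2, hy2j, hy2i⟩ := hgenj q2 hc2 hq2i
        obtain ⟨x2, hx2Q2, hx2i, hx2j⟩ := hgeni q2 hc2 hq2j
        -- y1 belongs to q2 as well
        have hy1Q2 : y1 ∈ (q2 : Finset V) := by
          refine mem_of_on_path hT hp1 hy1Q1 hy1j q2 ?_
          rw [Walk.support_cons]
          exact List.mem_cons_of_mem _ p2.start_mem_support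
        -- x2 belongs to q1 as well
        have hpm : (Walk.cons h1 (Walk.cons h2 Walk.nil) : T.Walk qi q2).IsPath := by
          rw [Walk.cons_isPath_iff]
          constructor
          · simp [Walk.cons_isPath_iff, hq1q2]
          · simp [Ne.symm hq1i, Ne.symm hq2i]
        have hx2Q1 : x2 ∈ (q1 : Finset V) := by
          refine mem_of_on_path hT hpm hx2i hx2Q2 q1 ?_
          rw [Walk.support_cons]
          exact List.mem_cons_of_mem _ (Walk.start_mem_support _)
        have hcap1 : (qi : Finset V) ∩ (qj : Finset V) ⊆ (q1 : Finset V) :=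
          fun v hv => hcapmem v hv q1 hq1mem
        have hcap2 : (qi : Finset V) ∩ (qj : Finset V) ⊆ (q2 : Finset V) :=
          fun v hv => hcapmem v hv q2 hq2mem
        -- x1 = x2
        have hxx : x1 = x2 := by
          by_contra hne
          have hsub5 : insert x1 (insert x2 (insert y1 ((qi : Finset V) ∩ (qj : Finset V))))
              ⊆ (q1 : Finset V) := by
            intro v hv
            rcases Finset.mem_insert.1 hv with rfl | hv
            · exact hx1Q1
            rcases Finset.mem_insert.1 hv with rfl | hv
            · exact hx2Q1
            rcases Finset.mem_insert.1 hv with rfl | hv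
            · exact hy1Q1
            · exact hcap1 hv
          have hcard5 : (insert x1 (insert x2 (insert y1
              ((qi : Finset V) ∩ (qj : Finset V))))).card = 5 := by
            rw [Finset.card_insert_of_notMem, Finset.card_insert_of_notMem,
              Finset.card_insert_of_notMem, hcap]
            · intro hmem
              exact hy1i (Finset.mem_inter.1 hmem).1
            · intro hmem
              rcases Finset.mem_insert.1 hmem with h | h
              · exact hy1i (h ▸ hx2i)
              · exact hx2j (Finset.mem_inter.1 h).2
            · intro hmem
              rcases Finset.mem_insert.1 hmem with h | h
              · exact hne h
              rcases Finset.mem_insert.1 h with h' | h'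
              · exact hy1i (h' ▸ hx1i)
              · exact hx1j (Finset.mem_inter.1 h').2
          have hle := Finset.card_le_card hsub5
          rw [hcard5, card4] at hle
          omega
        -- y1 = y2
        have hyy : y1 = y2 := by
          by_contra hne
          have hsub5 : insert y1 (insert y2 (insert x2 ((qi : Finset V) ∩ (qj : Finset V))))
              ⊆ (q2 : Finset V) := by
            intro v hv
            rcases Finset.mem_insert.1 hv with rfl | hv
            · exact hy1Q2
            rcases Finset.mem_insert.1 hv with rfl | hv
            · exact hy2Q2
            rcases Finset.mem_insert.1 hv with rfl | hv
            · exact hx2Q2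
            · exact hcap2 hv
          have hcard5 : (insert y1 (insert y2 (insert x2
              ((qi : Finset V) ∩ (qj : Finset V))))).card = 5 := by
            rw [Finset.card_insert_of_notMem, Finset.card_insert_of_notMem,
              Finset.card_insert_of_notMem, hcap]
            · intro hmem
              exact hx2j (Finset.mem_inter.1 hmem).2
            · intro hmem
              rcases Finset.mem_insert.1 hmem with h | h
              · exact hy2i (h ▸ hx2i) |>.elim
              · exact hy2i (Finset.mem_inter.1 h).1
            · intro hmem
              rcases Finset.mem_insert.1 hmem with h | h
              · exact hne h
              rcases Finset.mem_insert.1 h with h' | h'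
              · exact hy1i (h' ▸ hx2i)
              · exact hy1i (Finset.mem_inter.1 h').1
          have hle := Finset.card_le_card hsub5
          rw [hcard5, card4] at hle
          omega
        -- now q1 and q2 have the same vertex set
        have hcxy : (insert x1 (insert y1 ((qi : Finset V) ∩ (qj : Finset V)))).card = 4 := by
          rw [Finset.card_insert_of_notMem, Finset.card_insert_of_notMem, hcap]
          · intro hmem
            exact hy1i (Finset.mem_inter.1 hmem).1
          · intro hmem
            rcases Finset.mem_insert.1 hmem with h | h
            · exact hy1i (h ▸ hx1i)
            · exact hx1j (Finset.mem_inter.1 h).2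
        have hsubxy1 : insert x1 (insert y1 ((qi : Finset V) ∩ (qj : Finset V)))
            ⊆ (q1 : Finset V) := by
          intro v hv
          rcases Finset.mem_insert.1 hv with rfl | hv
          · exact hx1Q1
          rcases Finset.mem_insert.1 hv with rfl | hv
          · exact hy1Q1
          · exact hcap1 hv
        have hsubxy2 : insert x1 (insert y1 ((qi : Finset V) ∩ (qj : Finset V)))
            ⊆ (q2 : Finset V) := by
          intro v hv
          rcases Finset.mem_insert.1 hv with rfl | hv
          · exact hxx ▸ hx2Q2
          rcases Finset.mem_insert.1 hv with rfl | hv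
          · exact hyy ▸ hy2Q2
          · exact hcap2 hv
        have he1 : insert x1 (insert y1 ((qi : Finset V) ∩ (qj : Finset V))) = (q1 : Finset V) :=
          Finset.eq_of_subset_of_card_le hsubxy1 (by rw [card4, hcxy])
        have he2 : insert x1 (insert y1 ((qi : Finset V) ∩ (qj : Finset V))) = (q2 : Finset V) :=
          Finset.eq_of_subset_of_card_le hsubxy2 (by rw [card4, hcxy])
        exact hq1q2 (Subtype.ext (he1.symm.trans he2))
      · push_neg at hc2
        obtain ⟨v, hv1, hv2⟩ := hc2
        exact ⟨q2, hq2mem, hq2i, hq2j, v, hv1, hv2⟩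
    · push_neg at hc1
      obtain ⟨v, hv1, hv2⟩ := hc1
      exact ⟨q1, hq1mem, hq1i, hq1j, v, hv1, hv2⟩
  obtain ⟨m, hmmem, hmqi, hmqj, v7, hv7m, hv7U⟩ := hmid
  -- separation machinery
  set Kset : Set {Q : Finset V // IsMaximalClique G Q} := {Q | Q ≠ qi ∧ Q ≠ qj} with hKsetdef
  have hqiK : qi ∉ Kset := by rw [hKsetdef]; simp
  have hqjK : qj ∉ Kset := by rw [hKsetdef]; simp
  have hcompl : ∀ v : V, v ∉ U → v ∈ ((↑U : Set V)ᶜ) := fun v hv => by simpa using hv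
  have memK : ∀ u : V, u ∉ U → ∀ A : {Q : Finset V // IsMaximalClique G Q},
      u ∈ (A : Finset V) → A ∈ Kset := by
    intro u hu A hA
    rw [hKsetdef]
    constructor
    · intro h
      exact hu (by rw [hUdef]; exact Finset.mem_union_left _ (h ▸ hA))
    · intro h
      exact hu (by rw [hUdef]; exact Finset.mem_union_right _ (h ▸ hA))
  have same : ∀ u : V, u ∉ U → ∀ (A B : {Q : Finset V // IsMaximalClique G Q})
      (hA : u ∈ (A : Finset V)) (hB : u ∈ (B : Finset V)) (hAK : A ∈ Kset) (hBK : B ∈ Kset),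
      (T.induce Kset).Reachable ⟨A, hAK⟩ ⟨B, hBK⟩ := by
    intro u hu A B hA hB hAK hBK
    obtain ⟨W⟩ := htree.isConnected.preconnected A B
    have hPmem := mem_of_on_path hT W.toPath.2 hA hB
    exact reach_induce Kset (W.toPath : T.Walk A B)
      (fun x hx => memK u hu x (hPmem x hx)) hAK hBK
  have key : ∀ (x y : ↥((↑U : Set V)ᶜ)) (W : (G.induce ((↑U : Set V)ᶜ)).Walk x y)
      (A B : {Q : Finset V // IsMaximalClique G Q})
      (hA : ↑x ∈ (A : Finset V)) (hB : ↑y ∈ (B : Finset V))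
      (hAK : A ∈ Kset) (hBK : B ∈ Kset),
      (T.induce Kset).Reachable ⟨A, hAK⟩ ⟨B, hBK⟩ := by
    intro x y W
    induction W with
    | @nil z =>
      intro A B hA hB hAK hBK
      exact same _ (fun hh => z.2 (Finset.mem_coe.mpr hh)) A B hA hB hAK hBK
    | @cons u v w hadj q ih =>
      intro A B hA hB hAK hBK
      have hGadj : G.Adj (↑u) (↑v) := hadj
      obtain ⟨C, hCmax, hCu, hCv⟩ := edge_maxclique hGadj
      have hCK : (⟨C, hCmax⟩ : {Q : Finset V // IsMaximalClique G Q}) ∈ Kset :=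
        memK _ (fun hh => v.2 (Finset.mem_coe.mpr hh)) _ hCv
      exact (same _ (fun hh => u.2 (Finset.mem_coe.mpr hh)) A ⟨C, hCmax⟩ hA hCu hAK hCK).trans
        (ih ⟨C, hCmax⟩ B hCv hB hCK hBK)
  have sep : ∀ (u w : V) (huU : u ∉ U) (hwU : w ∉ U)
      (A B : {Q : Finset V // IsMaximalClique G Q})
      (hA : u ∈ (A : Finset V)) (hB : w ∈ (B : Finset V)) (hAK : A ∈ Kset) (hBK : B ∈ Kset)
      (P : T.Walk A B), P.IsPath → ∀ z : {Q : Finset V // IsMaximalClique G Q},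
      z ∈ P.support → z ∉ Kset →
      (G.induce ((↑U : Set V)ᶜ)).connectedComponentMk ⟨u, hcompl u huU⟩ ≠
      (G.induce ((↑U : Set V)ᶜ)).connectedComponentMk ⟨w, hcompl w hwU⟩ := by
    intro u w huU hwU A B hA hB hAK hBK P hPp z hz hzK heq
    obtain ⟨W⟩ := SimpleGraph.ConnectedComponent.exact heq
    exact not_reach_induce hac Kset P hPp hz hzK hAK hBK (key _ _ W A B hA hB hAK hBK)
  -- pairwise separation helpers
  have pairR : ∀ (rA rB : {Q : Finset V // IsMaximalClique G Q}),
      T.Adj qi rA → T.Adj qi rB → rA ≠ rB →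
      ∀ (u w : V) (huU : u ∉ U) (hwU : w ∉ U), u ∈ (rA : Finset V) → w ∈ (rB : Finset V) →
      (G.induce ((↑U : Set V)ᶜ)).connectedComponentMk ⟨u, hcompl u huU⟩ ≠
      (G.induce ((↑U : Set V)ᶜ)).connectedComponentMk ⟨w, hcompl w hwU⟩ := by
    intro rA rB hrA hrB hAB u w huU hwU hum hwm
    have hinner : (Walk.cons hrB Walk.nil : T.Walk qi rB).IsPath := by
      simp [Walk.cons_isPath_iff, hrB.ne]
    have hPp : (Walk.cons hrA.symm (Walk.cons hrB Walk.nil) : T.Walk rA rB).IsPath := by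
      rw [Walk.cons_isPath_iff]
      refine ⟨hinner, ?_⟩
      simp [hrA.ne', hAB]
    exact sep u w huU hwU rA rB hum hwm (memK u huU rA hum) (memK w hwU rB hwm)
      _ hPp qi (by simp [Walk.support_cons]) hqiK
  have pairS : ∀ (sA sB : {Q : Finset V // IsMaximalClique G Q}),
      T.Adj qj sA → T.Adj qj sB → sA ≠ sB →
      ∀ (u w : V) (huU : u ∉ U) (hwU : w ∉ U), u ∈ (sA : Finset V) → w ∈ (sB : Finset V) →
      (G.induce ((↑U : Set V)ᶜ)).connectedComponentMk ⟨u, hcompl u huU⟩ ≠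
      (G.induce ((↑U : Set V)ᶜ)).connectedComponentMk ⟨w, hcompl w hwU⟩ := by
    intro sA sB hsA hsB hAB u w huU hwU hum hwm
    have hinner : (Walk.cons hsB Walk.nil : T.Walk qj sB).IsPath := by
      simp [Walk.cons_isPath_iff, hsB.ne]
    have hPp : (Walk.cons hsA.symm (Walk.cons hsB Walk.nil) : T.Walk sA sB).IsPath := by
      rw [Walk.cons_isPath_iff]
      refine ⟨hinner, ?_⟩
      simp [hsA.ne', hAB]
    exact sep u w huU hwU sA sB hum hwm (memK u huU sA hum) (memK w hwU sB hwm)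
      _ hPp qj (by simp [Walk.support_cons]) hqjK
  have pairRS : ∀ (rA sB : {Q : Finset V // IsMaximalClique G Q})
      (hrA : T.Adj qi rA) (hsB : T.Adj qj sB),
      rA ∉ (Walk.cons h1 (Walk.cons h2 p2)).support →
      sB ∉ (Walk.cons h1 (Walk.cons h2 p2)).support →
      ∀ (u w : V) (huU : u ∉ U) (hwU : w ∉ U), u ∈ (rA : Finset V) → w ∈ (sB : Finset V) →
      (G.induce ((↑U : Set V)ᶜ)).connectedComponentMk ⟨u, hcompl u huU⟩ ≠
      (G.induce ((↑U : Set V)ᶜ)).connectedComponentMk ⟨w, hcompl w hwU⟩ := by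
    intro rA sB hrA hsB hrnp hsnp u w huU hwU hum hwm
    have hrsne : rA ≠ sB := by
      intro h
      subst h
      exact hrs_false rA hrA hsB
    have hsnp' : sB ∉ (Walk.cons h1 (Walk.cons h2 p2)).reverse.support := by
      rw [Walk.support_reverse]
      exact fun hmem => hsnp (List.mem_reverse.1 hmem)
    have hconcat : ((Walk.cons h1 (Walk.cons h2 p2)).concat hsB).IsPath := by
      rw [← Walk.isPath_reverse_iff, Walk.reverse_concat]
      exact hprpath.cons hsnp'
    have hPp : (Walk.cons hrA.symm
        ((Walk.cons h1 (Walk.cons h2 p2)).concat hsB)).IsPath := by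
      refine hconcat.cons ?_
      rw [Walk.support_concat]
      intro hmem
      rcases List.mem_append.1 hmem with h | h
      · exact hrnp h
      · exact hrsne (List.mem_singleton.1 h)
    refine sep u w huU hwU rA sB hum hwm (memK u huU rA hum) (memK w hwU sB hwm)
      _ hPp qi ?_ hqiK
    rw [Walk.support_cons]
    refine List.mem_cons_of_mem _ ?_
    rw [Walk.support_concat]
    exact List.mem_append_left _ (Walk.start_mem_support _)
  have pairRM : ∀ (rA : {Q : Finset V // IsMaximalClique G Q}) (hrA : T.Adj qi rA),
      rA ∉ (Walk.cons h1 (Walk.cons h2 p2)).support →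
      ∀ (u w : V) (huU : u ∉ U) (hwU : w ∉ U), u ∈ (rA : Finset V) → w ∈ (m : Finset V) →
      (G.induce ((↑U : Set V)ᶜ)).connectedComponentMk ⟨u, hcompl u huU⟩ ≠
      (G.induce ((↑U : Set V)ᶜ)).connectedComponentMk ⟨w, hcompl w hwU⟩ := by
    intro rA hrA hrnp u w huU hwU hum hwm
    have hPp : (Walk.cons hrA.symm
        ((Walk.cons h1 (Walk.cons h2 p2)).takeUntil m hmmem)).IsPath := by
      refine (hp.takeUntil hmmem).cons ?_
      exact fun hmem => hrnp (Walk.support_takeUntil_subset _ hmmem hmem)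
    refine sep u w huU hwU rA m hum hwm (memK u huU rA hum) (memK w hwU m hwm)
      _ hPp qi ?_ hqiK
    rw [Walk.support_cons]
    exact List.mem_cons_of_mem _ (Walk.start_mem_support _)
  have hmr : m ∈ (Walk.cons h1 (Walk.cons h2 p2)).reverse.support := by
    rw [Walk.support_reverse]
    exact List.mem_reverse.2 hmmem
  have pairSM : ∀ (sA : {Q : Finset V // IsMaximalClique G Q}) (hsA : T.Adj qj sA),
      sA ∉ (Walk.cons h1 (Walk.cons h2 p2)).support →
      ∀ (u w : V) (huU : u ∉ U) (hwU : w ∉ U), u ∈ (sA : Finset V) → w ∈ (m : Finset V) →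
      (G.induce ((↑U : Set V)ᶜ)).connectedComponentMk ⟨u, hcompl u huU⟩ ≠
      (G.induce ((↑U : Set V)ᶜ)).connectedComponentMk ⟨w, hcompl w hwU⟩ := by
    intro sA hsA hsnp u w huU hwU hum hwm
    have hsnp' : sA ∉ (Walk.cons h1 (Walk.cons h2 p2)).reverse.support := by
      rw [Walk.support_reverse]
      exact fun hmem => hsnp (List.mem_reverse.1 hmem)
    have hPp : (Walk.cons hsA.symm
        ((Walk.cons h1 (Walk.cons h2 p2)).reverse.takeUntil m hmr)).IsPath := by
      refine (hprpath.takeUntil hmr).cons ?_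
      exact fun hmem => hsnp' (Walk.support_takeUntil_subset _ hmr hmem)
    refine sep u w huU hwU sA m hum hwm (memK u huU sA hum) (memK w hwU m hwm)
      _ hPp qj ?_ hqjK
    rw [Walk.support_cons]
    exact List.mem_cons_of_mem _ (Walk.start_mem_support _)
  -- the seven witnesses
  have hr1f := hrfact r1 (by simp)
  have hr2f := hrfact r2 (by simp)
  have hr3f := hrfact r3 (by simp)
  have hs1f := hsfact s1 (by simp)
  have hs2f := hsfact s2 (by simp)
  have hs3f := hsfact s3 (by simp)
  have hr1np := hrnot r1 hr1f.1 hr1f.2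
  have hr2np := hrnot r2 hr2f.1 hr2f.2
  have hr3np := hrnot r3 hr3f.1 hr3f.2
  have hs1np := hsnot s1 hs1f.1 hs1f.2
  have hs2np := hsnot s2 hs2f.1 hs2f.2
  have hs3np := hsnot s3 hs3f.1 hs3f.2
  obtain ⟨w1, hw1m, hw1U⟩ := hrv r1 hr1f.1 hr1np
  obtain ⟨w2, hw2m, hw2U⟩ := hrv r2 hr2f.1 hr2np
  obtain ⟨w3, hw3m, hw3U⟩ := hrv r3 hr3f.1 hr3np
  obtain ⟨w4, hw4m, hw4U⟩ := hsv s1 hs1f.1 hs1np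
  obtain ⟨w5, hw5m, hw5U⟩ := hsv s2 hs2f.1 hs2np
  obtain ⟨w6, hw6m, hw6U⟩ := hsv s3 hs3f.1 hs3np
  set C1 := (G.induce ((↑U : Set V)ᶜ)).connectedComponentMk ⟨w1, hcompl w1 hw1U⟩ with hC1
  set C2 := (G.induce ((↑U : Set V)ᶜ)).connectedComponentMk ⟨w2, hcompl w2 hw2U⟩ with hC2
  set C3 := (G.induce ((↑U : Set V)ᶜ)).connectedComponentMk ⟨w3, hcompl w3 hw3U⟩ with hC3
  set C4 := (G.induce ((↑U : Set V)ᶜ)).connectedComponentMk ⟨w4, hcompl w4 hw4U⟩ with hC4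
  set C5 := (G.induce ((↑U : Set V)ᶜ)).connectedComponentMk ⟨w5, hcompl w5 hw5U⟩ with hC5
  set C6 := (G.induce ((↑U : Set V)ᶜ)).connectedComponentMk ⟨w6, hcompl w6 hw6U⟩ with hC6
  set C7 := (G.induce ((↑U : Set V)ᶜ)).connectedComponentMk ⟨v7, hcompl v7 hv7U⟩ with hC7
  have h12 : C1 ≠ C2 := pairR r1 r2 hr1f.1 hr2f.1 hr12 w1 w2 hw1U hw2U hw1m hw2m
  have h13 : C1 ≠ C3 := pairR r1 r3 hr1f.1 hr3f.1 hr13 w1 w3 hw1U hw3U hw1m hw3m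
  have h23 : C2 ≠ C3 := pairR r2 r3 hr2f.1 hr3f.1 hr23 w2 w3 hw2U hw3U hw2m hw3m
  have h45 : C4 ≠ C5 := pairS s1 s2 hs1f.1 hs2f.1 hs12 w4 w5 hw4U hw5U hw4m hw5m
  have h46 : C4 ≠ C6 := pairS s1 s3 hs1f.1 hs3f.1 hs13 w4 w6 hw4U hw6U hw4m hw6m
  have h56 : C5 ≠ C6 := pairS s2 s3 hs2f.1 hs3f.1 hs23 w5 w6 hw5U hw6U hw5m hw6m
  have h14 : C1 ≠ C4 := pairRS r1 s1 hr1f.1 hs1f.1 hr1np hs1np w1 w4 hw1U hw4U hw1m hw4m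
  have h15 : C1 ≠ C5 := pairRS r1 s2 hr1f.1 hs2f.1 hr1np hs2np w1 w5 hw1U hw5U hw1m hw5m
  have h16 : C1 ≠ C6 := pairRS r1 s3 hr1f.1 hs3f.1 hr1np hs3np w1 w6 hw1U hw6U hw1m hw6m
  have h24 : C2 ≠ C4 := pairRS r2 s1 hr2f.1 hs1f.1 hr2np hs1np w2 w4 hw2U hw4U hw2m hw4m
  have h25 : C2 ≠ C5 := pairRS r2 s2 hr2f.1 hs2f.1 hr2np hs2np w2 w5 hw2U hw5U hw2m hw5m
  have h26 : C2 ≠ C6 := pairRS r2 s3 hr2f.1 hs3f.1 hr2np hs3np w2 w6 hw2U hw6U hw2m hw6m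
  have h34 : C3 ≠ C4 := pairRS r3 s1 hr3f.1 hs1f.1 hr3np hs1np w3 w4 hw3U hw4U hw3m hw4m
  have h35 : C3 ≠ C5 := pairRS r3 s2 hr3f.1 hs2f.1 hr3np hs2np w3 w5 hw3U hw5U hw3m hw5m
  have h36 : C3 ≠ C6 := pairRS r3 s3 hr3f.1 hs3f.1 hr3np hs3np w3 w6 hw3U hw6U hw3m hw6m
  have h17 : C1 ≠ C7 := pairRM r1 hr1f.1 hr1np w1 v7 hw1U hv7U hw1m hv7m
  have h27 : C2 ≠ C7 := pairRM r2 hr2f.1 hr2np w2 v7 hw2U hv7U hw2m hv7m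
  have h37 : C3 ≠ C7 := pairRM r3 hr3f.1 hr3np w3 v7 hw3U hv7U hw3m hv7m
  have h47 : C4 ≠ C7 := pairSM s1 hs1f.1 hs1np w4 v7 hw4U hv7U hw4m hv7m
  have h57 : C5 ≠ C7 := pairSM s2 hs2f.1 hs2np w5 v7 hw5U hv7U hw5m hv7m
  have h67 : C6 ≠ C7 := pairSM s3 hs3f.1 hs3np w6 v7 hw6U hv7U hw6m hv7m
  -- counting components
  have h7 : 7 ≤ compCount G U := by
    have hfin : Finite (G.induce ((↑U : Set V)ᶜ)).ConnectedComponent :=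
      Finite.of_surjective (G.induce ((↑U : Set V)ᶜ)).connectedComponentMk
        (fun D => Quot.exists_rep D)
    letI := hfin
    letI : Fintype (G.induce ((↑U : Set V)ᶜ)).ConnectedComponent := Fintype.ofFinite _
    have hsubu := Finset.card_le_univ ({C1, C2, C3, C4, C5, C6, C7} :
      Finset (G.induce ((↑U : Set V)ᶜ)).ConnectedComponent)
    have hcard7 : ({C1, C2, C3, C4, C5, C6, C7} :
        Finset (G.induce ((↑U : Set V)ᶜ)).ConnectedComponent).card = 7 := by
      rw [Finset.card_insert_of_notMem (by simp [h12, h13, h14, h15, h16, h17]),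
        Finset.card_insert_of_notMem (by simp [h23, h24, h25, h26, h27]),
        Finset.card_insert_of_notMem (by simp [h34, h35, h36, h37]),
        Finset.card_insert_of_notMem (by simp [h45, h46, h47]),
        Finset.card_insert_of_notMem (by simp [h56, h57]),
        Finset.card_insert_of_notMem (by simp [h67]),
        Finset.card_singleton]
    have hcardle : Fintype.card (G.induce ((↑U : Set V)ᶜ)).ConnectedComponent =
        (Finset.univ : Finset (G.induce ((↑U : Set V)ᶜ)).ConnectedComponent).card :=
      rfl
    show 7 ≤ Nat.card (G.induce ((↑U : Set V)ᶜ)).ConnectedComponent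
    rw [Nat.card_eq_fintype_card, hcardle]
    omega
  refine ⟨hcup, h7, ?_, ?_⟩
  · -- toughness < 1
    have hle : toughness G ≤ 6 / 7 := by
      apply sSup_le
      intro t ht
      have hcc : 1 < compCount G U := by omega
      have h2 := ht U hcc
      rw [hcup] at h2
      have hc7 : (7 : ℝ≥0∞) ≤ (compCount G U : ℝ≥0∞) := by exact_mod_cast h7
      have h3 : t * 7 ≤ 6 :=
        calc t * 7 ≤ t * (compCount G U : ℝ≥0∞) := mul_le_mul_right hc7 t
          _ ≤ ((6 : ℕ) : ℝ≥0∞) := h2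
          _ = 6 := by norm_num
      rw [ENNReal.le_div_iff_mul_le (Or.inl (by norm_num)) (Or.inl (by norm_num))]
      exact h3
    refine lt_of_le_of_lt hle ?_
    rw [ENNReal.div_lt_iff (Or.inl (by norm_num)) (Or.inl (by norm_num))]
    norm_num
  · -- non-Hamiltonian
    intro hham
    have hUne : U.Nonempty := Finset.card_pos.1 (by rw [hcup]; omega)
    have hbound := ham_compCount_le hham U hUne (by have := hK.1; omega)
    omega
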